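/- Let ω ∈ (L^∞ ∩ L^1)(ℝ²) and let u be its Biot–Savart velocity. Then for every ε > 0, u₁(−ε,0) − u₁(ε,0) = (2ε/π) ∫_{ℝ²} ( y₁ y₂ / ( |(ε,0) − y|² |(−ε,0) − y|² ) ) ω(y) dy. -/

import Mathlib

open MeasureTheory Real Filter Set

noncomputable section

/-- The Biot–Savart velocity of a vorticity `ω ∈ (L^∞ ∩ L¹)(ℝ²)`:
`u(x) = (1/(2π)) ∫_{ℝ²} ((x₂ − y₂, y₁ − x₁)/|x − y|²) ω(y) dy`. -/
def biotSavart (ω : ℝ × ℝ → ℝ) (x : ℝ × ℝ) : ℝ × ℝ :=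
  ((1 / (2 * π)) * ∫ y : ℝ × ℝ, ((x.2 - y.2) / ((x.1 - y.1) ^ 2 + (x.2 - y.2) ^ 2)) * ω y,
   (1 / (2 * π)) * ∫ y : ℝ × ℝ, ((y.1 - x.1) / ((x.1 - y.1) ^ 2 + (x.2 - y.2) ^ 2)) * ω y)

lemma absRpowInt : IntervalIntegrable (fun a : ℝ => |a| ^ (-(1/2) : ℝ)) volume (-1) 1 := by
  have h1 : IntervalIntegrable (fun a : ℝ => |a| ^ (-(1/2) : ℝ)) volume 0 1 := by
    have h := intervalIntegral.intervalIntegrable_rpow' (a := 0) (b := 1) (r := -(1/2))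
      (by norm_num)
    rw [intervalIntegrable_iff] at h ⊢
    refine h.congr_fun ?_ measurableSet_uIoc
    intro a ha
    rw [Set.uIoc_of_le (by norm_num : (0:ℝ) ≤ 1)] at ha
    simp only
    rw [abs_of_pos ha.1]
  have h2 : IntervalIntegrable (fun a : ℝ => |a| ^ (-(1/2) : ℝ)) volume (-1) 0 := by
    have := ((IntervalIntegrable.iff_comp_neg (f := fun a : ℝ => |a| ^ (-(1/2) : ℝ)) enorm_ne_top).mp h1)
    simp only [abs_neg, neg_zero] at this
    exact this.symm
  exact h2.trans h1

lemma oneDimInt (c : ℝ) :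
    IntegrableOn (fun a : ℝ => |a - c| ^ (-(1/2) : ℝ)) (Metric.ball c 1) volume := by
  have h := absRpowInt.comp_sub_right c
  rw [intervalIntegrable_iff'] at h
  refine h.mono_set ?_
  rw [Real.ball_eq_Ioo]
  intro a ha
  rw [Set.mem_uIcc]
  left
  constructor <;> [linarith [ha.1]; linarith [ha.2]]

lemma keyIneq {a b : ℝ} (ha : a ≠ 0) (hb : b ≠ 0) :
    |b| / (a ^ 2 + b ^ 2) ≤ |a| ^ (-(1/2) : ℝ) * |b| ^ (-(1/2) : ℝ) := by
  have ha' : (0:ℝ) < |a| := abs_pos.mpr ha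
  have hb' : (0:ℝ) < |b| := abs_pos.mpr hb
  have hu : (0:ℝ) < Real.sqrt |a| := Real.sqrt_pos.mpr ha'
  have hv : (0:ℝ) < Real.sqrt |b| := Real.sqrt_pos.mpr hb'
  have hra : |a| ^ (-(1/2) : ℝ) = (Real.sqrt |a|)⁻¹ := by
    rw [Real.sqrt_eq_rpow, ← Real.rpow_neg (abs_nonneg a)]
  have hrb : |b| ^ (-(1/2) : ℝ) = (Real.sqrt |b|)⁻¹ := by
    rw [Real.sqrt_eq_rpow, ← Real.rpow_neg (abs_nonneg b)]
  rw [hra, hrb, ← mul_inv]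
  set u := Real.sqrt |a| with hudef
  set v := Real.sqrt |b| with hvdef
  have hu2 : u ^ 2 = |a| := Real.sq_sqrt (abs_nonneg a)
  have hv2 : v ^ 2 = |b| := Real.sq_sqrt (abs_nonneg b)
  have hpos : (0:ℝ) < a ^ 2 + b ^ 2 := by positivity
  have key : |b| * (u * v) ≤ a ^ 2 + b ^ 2 := by
    have ha2 : a ^ 2 = u ^ 4 := by rw [← sq_abs, ← hu2]; ring
    have hb2 : b ^ 2 = v ^ 4 := by rw [← sq_abs, ← hv2]; ring
    have hbv : |b| = v ^ 2 := hv2.symm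
    rw [ha2, hb2, hbv]
    nlinarith [sq_nonneg (u ^ 2 - v ^ 2), sq_nonneg (u * v - v ^ 2), sq_nonneg (u + v),
      mul_pos hu hv, sq_nonneg u, sq_nonneg v, sq_nonneg (u - v)]
  have huv : (0:ℝ) < u * v := mul_pos hu hv
  calc |b| / (a ^ 2 + b ^ 2) ≤ |b| / (|b| * (u * v)) := by
        apply div_le_div_of_nonneg_left (abs_nonneg b) (by positivity) key
    _ = (u * v)⁻¹ := by field_simp

lemma farBound {a b w : ℝ} (h : 1 ≤ max |a| |b|) :
    |b / (a ^ 2 + b ^ 2) * w| ≤ |w| := by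
  have hD : |b| ≤ a ^ 2 + b ^ 2 ∧ (1:ℝ) ≤ a ^ 2 + b ^ 2 := by
    rcases le_max_iff.mp h with h' | h'
    · constructor
      · nlinarith [sq_nonneg b, sq_abs a, abs_nonneg b, sq_nonneg (|b| - 1), sq_abs b]
      · nlinarith [sq_abs a, sq_nonneg b]
    · constructor
      · nlinarith [sq_abs b, sq_nonneg a, sq_nonneg (|b| - 1), abs_nonneg b]
      · nlinarith [sq_abs b, sq_nonneg a]
  have hDpos : (0:ℝ) < a ^ 2 + b ^ 2 := lt_of_lt_of_le one_pos hD.2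
  have hker : |b / (a ^ 2 + b ^ 2)| ≤ 1 := by
    rw [abs_div, abs_of_pos hDpos, div_le_one hDpos]
    exact hD.1
  calc |b / (a ^ 2 + b ^ 2) * w| = |b / (a ^ 2 + b ^ 2)| * |w| := abs_mul _ _
    _ ≤ 1 * |w| := mul_le_mul_of_nonneg_right hker (abs_nonneg _)
    _ = |w| := one_mul _

lemma nearBound {a b w C : ℝ} (ha : a ≠ 0) (hb : b ≠ 0) (hw : |w| ≤ C) :
    |b / (a ^ 2 + b ^ 2) * w| ≤ C * (|a| ^ (-(1/2) : ℝ) * |b| ^ (-(1/2) : ℝ)) := by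
  have hDpos : (0:ℝ) < a ^ 2 + b ^ 2 := by positivity
  have hkey := keyIneq ha hb
  calc |b / (a ^ 2 + b ^ 2) * w| = |b| / (a ^ 2 + b ^ 2) * |w| := by
        rw [abs_mul, abs_div, abs_of_pos hDpos]
    _ ≤ (|a| ^ (-(1/2) : ℝ) * |b| ^ (-(1/2) : ℝ)) * C :=
        mul_le_mul hkey hw (abs_nonneg _) (by positivity)
    _ = _ := by ring

lemma kernelIntegrable (ω : ℝ × ℝ → ℝ)
    (hbdd : MemLp ω ⊤ (volume : Measure (ℝ × ℝ)))
    (hint : Integrable ω (volume : Measure (ℝ × ℝ))) (x : ℝ × ℝ) :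
    Integrable (fun y : ℝ × ℝ =>
      ((x.2 - y.2) / ((x.1 - y.1) ^ 2 + (x.2 - y.2) ^ 2)) * ω y) volume := by
  have hmeas : AEStronglyMeasurable
      (fun y : ℝ × ℝ => ((x.2 - y.2) / ((x.1 - y.1) ^ 2 + (x.2 - y.2) ^ 2)) * ω y) volume := by
    apply AEStronglyMeasurable.mul _ hint.1
    apply Measurable.aestronglyMeasurable
    fun_prop
  have hMfin : eLpNormEssSup ω (volume : Measure (ℝ × ℝ)) < ⊤ := by
    have := hbdd.2
    rwa [eLpNorm_exponent_top] at this
  set C := (eLpNormEssSup ω (volume : Measure (ℝ × ℝ))).toReal with hC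
  have hωC : ∀ᵐ y : ℝ × ℝ ∂volume, ‖ω y‖ ≤ C := by
    filter_upwards [enorm_ae_le_eLpNormEssSup ω (volume : Measure (ℝ × ℝ))] with y hy
    have := ENNReal.toReal_mono hMfin.ne hy
    simpa using this
  have hC0 : 0 ≤ C := ENNReal.toReal_nonneg
  have hsm : MeasurableSet (Metric.ball x 1) := Metric.isOpen_ball.measurableSet
  -- Integrable on the complement of the ball
  have hcompl : IntegrableOn
      (fun y : ℝ × ℝ => ((x.2 - y.2) / ((x.1 - y.1) ^ 2 + (x.2 - y.2) ^ 2)) * ω y)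
      (Metric.ball x 1)ᶜ volume := by
    apply Integrable.mono' (hint.norm.integrableOn) hmeas.restrict
    rw [ae_restrict_iff' hsm.compl]
    filter_upwards with y hy
    have hdist : (1 : ℝ) ≤ dist y x := by
      simpa [Metric.mem_ball, not_lt] using hy
    rw [Prod.dist_eq, Real.dist_eq, Real.dist_eq, abs_sub_comm y.1 x.1,
      abs_sub_comm y.2 x.2] at hdist
    rw [Real.norm_eq_abs, Real.norm_eq_abs]
    exact farBound hdist
  -- Integrable on the ball
  have hball : IntegrableOn
      (fun y : ℝ × ℝ => ((x.2 - y.2) / ((x.1 - y.1) ^ 2 + (x.2 - y.2) ^ 2)) * ω y)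
      (Metric.ball x 1) volume := by
    have hgint : IntegrableOn (fun y : ℝ × ℝ =>
        C * (|y.1 - x.1| ^ (-(1/2) : ℝ) * |y.2 - x.2| ^ (-(1/2) : ℝ)))
        (Metric.ball x 1) volume := by
      rw [← ball_prod_same]
      apply Integrable.const_mul
      have hrestr : (volume : Measure (ℝ × ℝ)).restrict
          (Metric.ball x.1 1 ×ˢ Metric.ball x.2 1) =
          ((volume : Measure ℝ).restrict (Metric.ball x.1 1)).prod
            ((volume : Measure ℝ).restrict (Metric.ball x.2 1)) := by
        rw [Measure.volume_eq_prod, Measure.prod_restrict]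
      rw [hrestr]
      exact Integrable.mul_prod (oneDimInt x.1) (oneDimInt x.2)
    apply Integrable.mono' hgint hmeas.restrict
    have hnull1 : (volume : Measure (ℝ × ℝ)) {y : ℝ × ℝ | y.1 = x.1} = 0 := by
      have he : {y : ℝ × ℝ | y.1 = x.1} = ({x.1} : Set ℝ) ×ˢ (Set.univ : Set ℝ) := by
        ext y
        simp only [Set.mem_prod, Set.mem_singleton_iff, Set.mem_univ, and_true,
          Set.mem_setOf_eq]
      rw [he, Measure.volume_eq_prod, Measure.prod_prod]
      simp
    have hnull2 : (volume : Measure (ℝ × ℝ)) {y : ℝ × ℝ | y.2 = x.2} = 0 := by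
      have he : {y : ℝ × ℝ | y.2 = x.2} = (Set.univ : Set ℝ) ×ˢ ({x.2} : Set ℝ) := by
        ext y
        simp only [Set.mem_prod, Set.mem_singleton_iff, Set.mem_univ, true_and,
          Set.mem_setOf_eq]
      rw [he, Measure.volume_eq_prod, Measure.prod_prod]
      simp
    have h1 : ∀ᵐ y : ℝ × ℝ ∂volume, y.1 ≠ x.1 := by
      rw [ae_iff]; simpa using hnull1
    have h2 : ∀ᵐ y : ℝ × ℝ ∂volume, y.2 ≠ x.2 := by
      rw [ae_iff]; simpa using hnull2
    apply ae_restrict_of_ae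
    filter_upwards [hωC, h1, h2] with y hyC hy1 hy2
    have ha : x.1 - y.1 ≠ 0 := sub_ne_zero.mpr (fun h => hy1 h.symm)
    have hb : x.2 - y.2 ≠ 0 := sub_ne_zero.mpr (fun h => hy2 h.symm)
    rw [Real.norm_eq_abs]
    have := nearBound ha hb (by simpa using hyC)
    calc |(x.2 - y.2) / ((x.1 - y.1) ^ 2 + (x.2 - y.2) ^ 2) * ω y|
        ≤ C * (|x.1 - y.1| ^ (-(1/2) : ℝ) * |x.2 - y.2| ^ (-(1/2) : ℝ)) := this
      _ = C * (|y.1 - x.1| ^ (-(1/2) : ℝ) * |y.2 - x.2| ^ (-(1/2) : ℝ)) := by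
          rw [abs_sub_comm x.1 y.1, abs_sub_comm x.2 y.2]
  have := hball.union hcompl
  rwa [Set.union_compl_self, integrableOn_univ] at this

theorem statement6 (ω : ℝ × ℝ → ℝ)
    (hbdd : MemLp ω ⊤ (volume : Measure (ℝ × ℝ)))
    (hint : Integrable ω (volume : Measure (ℝ × ℝ)))
    (ε : ℝ) (hε : 0 < ε) :
    (biotSavart ω (-ε, 0)).1 - (biotSavart ω (ε, 0)).1 =
      (2 * ε / π) * ∫ y : ℝ × ℝ,
        (y.1 * y.2 / (((ε - y.1) ^ 2 + y.2 ^ 2) * ((ε + y.1) ^ 2 + y.2 ^ 2))) * ω y := by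
  have hA := kernelIntegrable ω hbdd hint (-ε, 0)
  have hB := kernelIntegrable ω hbdd hint (ε, 0)
  simp only [biotSavart]
  rw [← mul_sub, ← integral_sub hA hB]
  have hπ : (π : ℝ) ≠ 0 := Real.pi_ne_zero
  have hc : (2 * ε / π : ℝ) = (1 / (2 * π)) * (4 * ε) := by field_simp; ring
  rw [hc, mul_assoc]
  congr 1
  rw [← integral_const_mul]
  congr 1
  funext y
  simp only
  rcases eq_or_ne y.2 0 with h | h
  · simp [h]
  · have hy2 : (0:ℝ) < y.2 ^ 2 := by positivity
    have hB' : (0:ℝ) < (ε - y.1) ^ 2 + y.2 ^ 2 := by positivity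
    have hA' : (0:ℝ) < (ε + y.1) ^ 2 + y.2 ^ 2 := by positivity
    have hA'' : (0:ℝ) < (-ε - y.1) ^ 2 + (0 - y.2) ^ 2 := by nlinarith
    have hB'' : (0:ℝ) < (ε - y.1) ^ 2 + (0 - y.2) ^ 2 := by nlinarith
    rw [← sub_mul, ← mul_assoc]
    congr 1
    field_simp
    ring

end
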